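/- Let (φ, b) solve φ' = (1 + b²)/(2h²), b' = 2bφ on (0, R] with b(R) ≠ 0 and h(t) = t + O(t³) near 0. Then for every δ smaller than the constant c₅ from the exponential lower bound b(r)² ≥ c·e^{c₅/r²}, one has lim_{r → 0⁺} |φ(r)|·e^{-δ/r²} = ∞. -/

import Mathlib

set_option maxHeartbeats 1000000


open Real Filter Set

lemma sq_div_four_le_exp (x : ℝ) (hx : 0 ≤ x) : x ^ 2 / 4 ≤ Real.exp x := by
  have h1 := Real.add_one_le_exp (x / 2)
  have h2 : Real.exp x = Real.exp (x / 2) * Real.exp (x / 2) := by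
    rw [← Real.exp_add]; ring_nf
  nlinarith [Real.exp_pos (x / 2)]

/-- For a solution of `φ' = (1 + b²)/(2h²)`, `b' = 2bφ` on
`(0, R]` with `b(R) ≠ 0`, `h(t) = t + O(t³)` near `0`, and the exponential
lower bound `b(r)² ≥ c·e^{c₅/r²}` near `0`, one has
`lim_{r→0⁺} |φ(r)|·e^{-δ/r²} = ∞` for every `0 < δ < c₅`. -/
theorem phi_diverges_faster_than_exp
    (h φ b : ℝ → ℝ) (R : ℝ) (hR : 0 < R)
    (hhpos : ∀ t ∈ Ioi (0:ℝ), 0 < h t)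
    (hhasymp : ∃ C t₁ : ℝ, 0 < C ∧ 0 < t₁ ∧
      ∀ t ∈ Ioc (0:ℝ) t₁, |h t - t| ≤ C * t ^ 3)
    (hODE : ∀ r ∈ Ioc (0:ℝ) R,
      HasDerivAt φ ((1 + b r ^ 2) / (2 * h r ^ 2)) r ∧
      HasDerivAt b (2 * b r * φ r) r)
    (hbR : b R ≠ 0)
    (c c₅ : ℝ) (hc : 0 < c) (hc₅ : 0 < c₅)
    (hblow : ∀ r ∈ Ioc (0:ℝ) R, c * Real.exp (c₅ / r ^ 2) ≤ b r ^ 2) :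
    ∀ δ : ℝ, 0 < δ → δ < c₅ →
      Tendsto (fun r => |φ r| * Real.exp (-δ / r ^ 2))
        (nhdsWithin 0 (Ioi 0)) atTop := by
  intro δ hδ hδc₅
  obtain ⟨C, t₁, hC, ht₁, hasymp⟩ := hhasymp
  obtain ⟨δ', hδδ', hδ'c₅⟩ : ∃ δ', δ < δ' ∧ δ' < c₅ :=
    ⟨(δ + c₅) / 2, by linarith, by linarith⟩
  have hδ'pos : 0 < δ' := lt_trans hδ hδδ'
  set ε : ℝ := c₅ - δ' with hεdef
  have hε : 0 < ε := by simp [hεdef]; linarith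
  -- the small radius r₀
  set r₀ : ℝ := min R (min t₁ (min 1 (min (C + 1)⁻¹ (c * ε ^ 2 / (64 * δ'))))) with hr₀def
  have hr₀pos : 0 < r₀ := by
    refine lt_min hR (lt_min ht₁ (lt_min one_pos (lt_min (by positivity) (by positivity))))
  have hr₀R : r₀ ≤ R := min_le_left _ _
  have hr₀t₁ : r₀ ≤ t₁ := le_trans (min_le_right _ _) (min_le_left _ _)
  have hr₀1 : r₀ ≤ 1 := le_trans (min_le_right _ _) (le_trans (min_le_right _ _) (min_le_left _ _))
  have hr₀C : r₀ ≤ (C + 1)⁻¹ := le_trans (min_le_right _ _)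
    (le_trans (min_le_right _ _) (le_trans (min_le_right _ _) (min_le_left _ _)))
  have hr₀c : r₀ ≤ c * ε ^ 2 / (64 * δ') := le_trans (min_le_right _ _)
    (le_trans (min_le_right _ _) (le_trans (min_le_right _ _) (min_le_right _ _)))
  -- key derivative lower bound
  have hkey : ∀ r ∈ Ioc (0:ℝ) r₀,
      2 * δ' / r ^ 3 * Real.exp (δ' / r ^ 2) ≤ (1 + b r ^ 2) / (2 * h r ^ 2) := by
    intro r hr
    have hrpos : 0 < r := hr.1
    have hr1 : r ≤ 1 := le_trans hr.2 hr₀1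
    have hrC : r ≤ (C + 1)⁻¹ := le_trans hr.2 hr₀C
    have hrc : r ≤ c * ε ^ 2 / (64 * δ') := le_trans hr.2 hr₀c
    have hCr2 : C * r ^ 2 ≤ 1 := by
      have h1 : r * (C + 1) ≤ (C + 1)⁻¹ * (C + 1) :=
        mul_le_mul_of_nonneg_right hrC (by linarith)
      rw [inv_mul_cancel₀ (by linarith : C + 1 ≠ 0)] at h1
      nlinarith
    have hhr := hasymp r ⟨hrpos, le_trans hr.2 hr₀t₁⟩
    have habs := abs_le.mp hhr
    have hhub : h r ≤ 2 * r := by nlinarith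
    have hhp : 0 < h r := hhpos r hrpos
    have hh2 : 2 * h r ^ 2 ≤ 8 * r ^ 2 := by nlinarith
    have hbb : c * Real.exp (c₅ / r ^ 2) ≤ b r ^ 2 :=
      hblow r ⟨hrpos, le_trans hr.2 hr₀R⟩
    have step1 : c * Real.exp (c₅ / r ^ 2) / (8 * r ^ 2) ≤ (1 + b r ^ 2) / (2 * h r ^ 2) := by
      apply div_le_div₀ (by nlinarith [sq_nonneg (b r)]) (by linarith) (by positivity) hh2
    have hEsplit : Real.exp (c₅ / r ^ 2)
        = Real.exp (δ' / r ^ 2) * Real.exp (ε / r ^ 2) := by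
      rw [← Real.exp_add]; congr 1; rw [hεdef]; ring
    have hq : ε ^ 2 / (4 * r ^ 4) ≤ Real.exp (ε / r ^ 2) := by
      have h1 := sq_div_four_le_exp (ε / r ^ 2) (by positivity)
      have h2 : (ε / r ^ 2) ^ 2 / 4 = ε ^ 2 / (4 * r ^ 4) := by ring
      linarith [h2 ▸ h1]
    have key : 2 * δ' / r ^ 3 ≤ c / (8 * r ^ 2) * (ε ^ 2 / (4 * r ^ 4)) := by
      have hrw : c / (8 * r ^ 2) * (ε ^ 2 / (4 * r ^ 4)) = c * ε ^ 2 / (32 * r ^ 6) := by ring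
      rw [hrw, div_le_div_iff₀ (by positivity) (by positivity)]
      have h64 : 64 * δ' * r ≤ c * ε ^ 2 := by
        have := mul_le_mul_of_nonneg_left hrc (by positivity : (0:ℝ) ≤ 64 * δ')
        calc 64 * δ' * r ≤ 64 * δ' * (c * ε ^ 2 / (64 * δ')) := this
          _ = c * ε ^ 2 := by field_simp
      have hr64 : r ^ 6 ≤ r ^ 4 := pow_le_pow_of_le_one hrpos.le hr1 (by norm_num)
      have e1 : 2 * δ' * (32 * r ^ 6) = 64 * δ' * r ^ 6 := by ring
      have e2 : 64 * δ' * r ^ 6 ≤ 64 * δ' * r ^ 4 :=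
        mul_le_mul_of_nonneg_left hr64 (by positivity)
      have e3 : 64 * δ' * r ^ 4 = (64 * δ' * r) * r ^ 3 := by ring
      have e4 : (64 * δ' * r) * r ^ 3 ≤ (c * ε ^ 2) * r ^ 3 :=
        mul_le_mul_of_nonneg_right h64 (pow_nonneg hrpos.le 3)
      linarith
    calc 2 * δ' / r ^ 3 * Real.exp (δ' / r ^ 2)
        ≤ c / (8 * r ^ 2) * (ε ^ 2 / (4 * r ^ 4)) * Real.exp (δ' / r ^ 2) :=
          mul_le_mul_of_nonneg_right key (Real.exp_pos _).le
      _ ≤ c / (8 * r ^ 2) * Real.exp (ε / r ^ 2) * Real.exp (δ' / r ^ 2) := by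
          have := mul_le_mul_of_nonneg_left hq (by positivity : (0:ℝ) ≤ c / (8 * r ^ 2))
          exact mul_le_mul_of_nonneg_right this (Real.exp_pos _).le
      _ = c * Real.exp (c₅ / r ^ 2) / (8 * r ^ 2) := by rw [hEsplit]; ring
    exact le_trans (by linarith) step1
  -- the auxiliary function g
  set g : ℝ → ℝ := fun r => φ r + Real.exp (δ' / r ^ 2) with hgdef
  have hgderiv : ∀ r ∈ Ioc (0:ℝ) R,
      HasDerivAt g ((1 + b r ^ 2) / (2 * h r ^ 2)
        + Real.exp (δ' / r ^ 2) * (-(2 * δ') / r ^ 3)) r := by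
    intro r hr
    have hr0 : r ≠ 0 := ne_of_gt hr.1
    have hp : HasDerivAt (fun x : ℝ => x ^ 2) (2 * r) r := by
      simpa using hasDerivAt_pow 2 r
    have hd : HasDerivAt (fun x : ℝ => δ' / x ^ 2) (-(2 * δ') / r ^ 3) r := by
      have := (hasDerivAt_const r δ').div hp (pow_ne_zero 2 hr0)
      refine this.congr_deriv ?_
      rw [div_eq_div_iff (pow_ne_zero _ (pow_ne_zero _ hr0)) (pow_ne_zero _ hr0)]
      ring
    exact (hODE r hr).1.add hd.exp
  -- monotonicity of g on (0, r₀]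
  have hgmono : ∀ r ∈ Ioc (0:ℝ) r₀, g r ≤ g r₀ := by
    intro r hr
    have hsub : Icc r r₀ ⊆ Ioc (0:ℝ) R := fun x hx =>
      ⟨lt_of_lt_of_le hr.1 hx.1, le_trans hx.2 hr₀R⟩
    have hmono : MonotoneOn g (Icc r r₀) := by
      apply monotoneOn_of_deriv_nonneg (convex_Icc r r₀)
      · intro x hx
        exact ((hgderiv x (hsub hx)).continuousAt).continuousWithinAt
      · intro x hx
        rw [interior_Icc] at hx
        exact ((hgderiv x (hsub (Ioo_subset_Icc_self hx))).differentiableAt).differentiableWithinAt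
      · intro x hx
        rw [interior_Icc] at hx
        have hx' : x ∈ Ioc (0:ℝ) r₀ := ⟨lt_trans hr.1 hx.1, hx.2.le⟩
        rw [(hgderiv x (hsub (Ioo_subset_Icc_self hx))).deriv]
        have hk := hkey x hx'
        have hxpos : 0 < x := hx'.1
        have : Real.exp (δ' / x ^ 2) * (-(2 * δ') / x ^ 3)
            = -(2 * δ' / x ^ 3 * Real.exp (δ' / x ^ 2)) := by ring
        rw [this]
        linarith
    exact hmono ⟨le_refl r, hr.2⟩ ⟨hr.2, le_refl r₀⟩ hr.2
  -- lower bound for |φ|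
  set M : ℝ := g r₀ with hMdef
  have hlow : ∀ r ∈ Ioc (0:ℝ) r₀,
      Real.exp ((δ' - δ) / r ^ 2) - |M| ≤ |φ r| * Real.exp (-δ / r ^ 2) := by
    intro r hr
    have hrpos : 0 < r := hr.1
    have hφle : φ r ≤ M - Real.exp (δ' / r ^ 2) := by
      have := hgmono r hr
      simp only [hgdef] at this
      linarith
    have h1 : Real.exp (δ' / r ^ 2) - M ≤ |φ r| := by
      calc Real.exp (δ' / r ^ 2) - M ≤ -(φ r) := by linarith
        _ ≤ |φ r| := neg_le_abs _
    have hE : (0:ℝ) < Real.exp (-δ / r ^ 2) := Real.exp_pos _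
    have h2 : (Real.exp (δ' / r ^ 2) - M) * Real.exp (-δ / r ^ 2)
        ≤ |φ r| * Real.exp (-δ / r ^ 2) := mul_le_mul_of_nonneg_right h1 hE.le
    have hEmul : Real.exp (δ' / r ^ 2) * Real.exp (-δ / r ^ 2)
        = Real.exp ((δ' - δ) / r ^ 2) := by
      rw [← Real.exp_add]; congr 1; ring
    have hE1 : Real.exp (-δ / r ^ 2) ≤ 1 := by
      rw [← Real.exp_zero]
      apply Real.exp_le_exp.mpr
      exact div_nonpos_of_nonpos_of_nonneg (by linarith) (pow_nonneg hrpos.le 2)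
    have h3 : M * Real.exp (-δ / r ^ 2) ≤ |M| := by
      calc M * Real.exp (-δ / r ^ 2) ≤ |M| * Real.exp (-δ / r ^ 2) :=
            mul_le_mul_of_nonneg_right (le_abs_self M) hE.le
        _ ≤ |M| * 1 := mul_le_mul_of_nonneg_left hE1 (abs_nonneg M)
        _ = |M| := mul_one _
    calc Real.exp ((δ' - δ) / r ^ 2) - |M|
        ≤ Real.exp (δ' / r ^ 2) * Real.exp (-δ / r ^ 2) - M * Real.exp (-δ / r ^ 2) := by
          rw [hEmul]; linarith
      _ = (Real.exp (δ' / r ^ 2) - M) * Real.exp (-δ / r ^ 2) := by ring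
      _ ≤ |φ r| * Real.exp (-δ / r ^ 2) := h2
  -- conclude via comparison
  have hF : Tendsto (fun r : ℝ => Real.exp ((δ' - δ) / r ^ 2) - |M|)
      (nhdsWithin 0 (Ioi 0)) atTop := by
    have h2 : Tendsto (fun r : ℝ => r ^ 2) (nhdsWithin 0 (Ioi 0)) (nhdsWithin 0 (Ioi 0)) := by
      apply tendsto_nhdsWithin_of_tendsto_nhds_of_eventually_within
      · have h0 : Tendsto (fun r : ℝ => r ^ 2) (nhds 0) (nhds 0) := by
          simpa using ((continuous_pow 2).tendsto (0:ℝ))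
        exact h0.mono_left nhdsWithin_le_nhds
      · filter_upwards [self_mem_nhdsWithin] with x hx
        exact pow_pos (show (0:ℝ) < x from hx) 2
    have h3 : Tendsto (fun r : ℝ => (r ^ 2)⁻¹) (nhdsWithin 0 (Ioi 0)) atTop :=
      tendsto_inv_nhdsGT_zero.comp h2
    have h4 : Tendsto (fun r : ℝ => (δ' - δ) / r ^ 2) (nhdsWithin 0 (Ioi 0)) atTop := by
      have := Tendsto.const_mul_atTop (by linarith : (0:ℝ) < δ' - δ) h3
      simpa [div_eq_mul_inv] using this
    have h5 := Real.tendsto_exp_atTop.comp h4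
    have := tendsto_atTop_add_const_right _ (-|M|) h5
    simpa [sub_eq_add_neg, Function.comp] using this
  apply tendsto_atTop_mono' _ _ hF
  filter_upwards [Ioc_mem_nhdsGT_of_mem (⟨le_refl (0:ℝ), hr₀pos⟩ : (0:ℝ) ∈ Ico (0:ℝ) r₀)]
    with r hr
  exact hlow r hr
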